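/- For all x, y ∈ ℝ₊ⁿ, 4·JS(x,y) ≤ ρ(x,y)² ≤ (4/ln 2)·JS(x,y), where JS(x,y) = ½ ∑_i ( x_i ln(2x_i/(x_i+y_i)) + y_i ln(2y_i/(x_i+y_i)) ) and ρ(x,y)² = 2 ∑_i (√x_i − √y_i)². -/

import Mathlib

open Real Set

noncomputable def Ffn (d : ℝ) : ℝ := (1+d) * Real.log (1+d) + (1-d) * Real.log (1-d)
noncomputable def Gfn (d : ℝ) : ℝ := 2 - 2 * Real.sqrt (1 - d^2)
noncomputable def Ffn' (d : ℝ) : ℝ := Real.log (1+d) - Real.log (1-d)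
noncomputable def Gfn' (d : ℝ) : ℝ := 2*d / Real.sqrt (1 - d^2)

lemma continuous_Ffn : Continuous Ffn := by
  have h := Real.continuous_mul_log
  exact (h.comp (by continuity : Continuous fun d : ℝ => 1 + d)).add
    (h.comp (by continuity : Continuous fun d : ℝ => 1 - d))

lemma continuous_Gfn : Continuous Gfn := by
  unfold Gfn; continuity

lemma hasDerivAt_Ffn {d : ℝ} (hd : d ∈ Ioo (-1:ℝ) 1) : HasDerivAt Ffn (Ffn' d) d := by
  obtain ⟨h1, h2⟩ := hd
  have hp : (0:ℝ) < 1 + d := by linarith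
  have hm : (0:ℝ) < 1 - d := by linarith
  have hup : HasDerivAt (fun t : ℝ => 1 + t) 1 d := by
    simpa using (hasDerivAt_id d).const_add 1
  have hum : HasDerivAt (fun t : ℝ => 1 - t) (-1) d := by
    simpa using (hasDerivAt_id d).const_sub 1
  have hlp : HasDerivAt (fun t : ℝ => Real.log (1 + t)) (1 / (1 + d)) d := by
    simpa using hup.log hp.ne'
  have hlm : HasDerivAt (fun t : ℝ => Real.log (1 - t)) (-1 / (1 - d)) d := by
    simpa using hum.log hm.ne'
  have h := (hup.mul hlp).add (hum.mul hlm)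
  refine h.congr_deriv ?_
  unfold Ffn'
  field_simp [hp.ne', hm.ne']
  ring

lemma hasDerivAt_sqrtc {d : ℝ} (hd : d ∈ Ioo (-1:ℝ) 1) :
    HasDerivAt (fun t : ℝ => Real.sqrt (1 - t^2)) (-d / Real.sqrt (1 - d^2)) d := by
  have hpos : 0 < 1 - d^2 := by nlinarith [hd.1, hd.2]
  have hu : HasDerivAt (fun t : ℝ => 1 - t^2) (-(2*d)) d := by
    simpa using ((hasDerivAt_pow 2 d).const_sub 1)
  have h := hu.sqrt hpos.ne'
  convert h using 1
  have hs : 0 < Real.sqrt (1 - d^2) := Real.sqrt_pos.2 hpos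
  field_simp

lemma hasDerivAt_Gfn {d : ℝ} (hd : d ∈ Ioo (-1:ℝ) 1) : HasDerivAt Gfn (Gfn' d) d := by
  have h := ((hasDerivAt_sqrtc hd).const_mul 2).const_sub 2
  refine h.congr_deriv ?_
  unfold Gfn'
  field_simp

lemma hasDerivAt_Ffn' {d : ℝ} (hd : d ∈ Ioo (-1:ℝ) 1) :
    HasDerivAt Ffn' (2 / (1 - d^2)) d := by
  obtain ⟨h1, h2⟩ := hd
  have hp : (0:ℝ) < 1 + d := by linarith
  have hm : (0:ℝ) < 1 - d := by linarith
  have hne : (1:ℝ) - d^2 ≠ 0 := by nlinarith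
  have hlp : HasDerivAt (fun t : ℝ => Real.log (1 + t)) (1 / (1 + d)) d := by
    simpa using ((hasDerivAt_id d).const_add 1).log hp.ne'
  have hlm : HasDerivAt (fun t : ℝ => Real.log (1 - t)) (-1 / (1 - d)) d := by
    simpa using ((hasDerivAt_id d).const_sub 1).log hm.ne'
  have h := hlp.sub hlm
  refine h.congr_deriv ?_
  field_simp [hne, hp.ne', hm.ne']
  ring

lemma hasDerivAt_Gfn' {d : ℝ} (hd : d ∈ Ioo (-1:ℝ) 1) :
    HasDerivAt Gfn' (2 / (Real.sqrt (1 - d^2))^3) d := by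
  have hpos : 0 < 1 - d^2 := by nlinarith [hd.1, hd.2]
  have hs : 0 < Real.sqrt (1 - d^2) := Real.sqrt_pos.2 hpos
  have hu : HasDerivAt (fun t : ℝ => 2*t) 2 d := by
    simpa using (hasDerivAt_id d).const_mul 2
  have h := hu.div (hasDerivAt_sqrtc hd) hs.ne'
  have heq : HasDerivAt (fun t : ℝ => 2*t / Real.sqrt (1 - t^2))
      ((2 * Real.sqrt (1 - d^2) - 2*d * (-d / Real.sqrt (1 - d^2))) / Real.sqrt (1 - d^2) ^ 2) d := h
  refine heq.congr_deriv ?_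
  set c := Real.sqrt (1 - d^2) with hc
  have hsq : c ^ 2 = 1 - d^2 := Real.sq_sqrt hpos.le
  field_simp
  linear_combination hsq

lemma Ffn_zero : Ffn 0 = 0 := by simp [Ffn]
lemma Gfn_zero : Gfn 0 = 0 := by simp [Gfn]
lemma Ffn'_zero : Ffn' 0 = 0 := by simp [Ffn']
lemma Gfn'_zero : Gfn' 0 = 0 := by simp [Gfn']

/-- Upper bound: `F ≤ G` on `[0,1)`. -/
lemma Ffn_le_Gfn {d : ℝ} (hd : d ∈ Ico (0:ℝ) 1) : Ffn d ≤ Gfn d := by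
  have hsub : Ico (0:ℝ) 1 ⊆ Ioo (-1:ℝ) 1 := fun x hx => ⟨by linarith [hx.1], hx.2⟩
  have hmono' : MonotoneOn (fun t => Gfn' t - Ffn' t) (Ico (0:ℝ) 1) := by
    apply monotoneOn_of_hasDerivWithinAt_nonneg (convex_Ico 0 1)
      (f' := fun t => 2 / (Real.sqrt (1 - t^2))^3 - 2 / (1 - t^2))
    · intro x hx
      exact ((hasDerivAt_Gfn' (hsub hx)).sub
        (hasDerivAt_Ffn' (hsub hx))).continuousAt.continuousWithinAt
    · intro x hx
      rw [interior_Ico] at hx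
      exact (((hasDerivAt_Gfn' (hsub (Ioo_subset_Ico_self hx))).sub
        (hasDerivAt_Ffn' (hsub (Ioo_subset_Ico_self hx))))).hasDerivWithinAt
    · intro x hx
      rw [interior_Ico] at hx
      have hpos : 0 < 1 - x^2 := by nlinarith [hx.1, hx.2]
      have hs : 0 < Real.sqrt (1 - x^2) := Real.sqrt_pos.2 hpos
      have hs1 : Real.sqrt (1 - x^2) ≤ 1 := by
        have h := Real.sqrt_le_sqrt (show 1 - x^2 ≤ 1 by nlinarith [hx.1])
        rwa [Real.sqrt_one] at h
      set c := Real.sqrt (1 - x^2) with hc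
      have hsq : c ^ 2 = 1 - x^2 := Real.sq_sqrt hpos.le
      rw [← hsq, sub_nonneg, div_le_div_iff₀ (by positivity) (pow_pos hs 3)]
      nlinarith [mul_le_mul_of_nonneg_right hs1 (sq_nonneg c), hs]
  have hH'nonneg : ∀ x ∈ Ico (0:ℝ) 1, 0 ≤ Gfn' x - Ffn' x := by
    intro x hx
    have h := hmono' (left_mem_Ico.2 one_pos) hx hx.1
    simpa [Gfn'_zero, Ffn'_zero] using h
  have hmono : MonotoneOn (fun t => Gfn t - Ffn t) (Ico (0:ℝ) 1) := by
    apply monotoneOn_of_hasDerivWithinAt_nonneg (convex_Ico 0 1)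
      (f' := fun t => Gfn' t - Ffn' t)
    · exact (continuous_Gfn.sub continuous_Ffn).continuousOn
    · intro x hx
      rw [interior_Ico] at hx
      exact ((hasDerivAt_Gfn (hsub (Ioo_subset_Ico_self hx))).sub
        (hasDerivAt_Ffn (hsub (Ioo_subset_Ico_self hx)))).hasDerivWithinAt
    · intro x hx
      rw [interior_Ico] at hx
      exact hH'nonneg x (Ioo_subset_Ico_self hx)
  have h := hmono (left_mem_Ico.2 one_pos) hd hd.1
  simp only [Gfn_zero, Ffn_zero, sub_zero] at h
  linarith [h]

lemma log_two_mem : Real.log 2 ∈ Ioo (0:ℝ) 1 := by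
  constructor
  · exact Real.log_pos (by norm_num)
  · have := Real.log_two_lt_d9
    linarith

/-- Lower bound: `log 2 · G ≤ F` on `[0,1)`. -/
lemma log_two_Gfn_le_Ffn {d : ℝ} (hd : d ∈ Ico (0:ℝ) 1) :
    Real.log 2 * Gfn d ≤ Ffn d := by
  set L := Real.log 2 with hL
  obtain ⟨hL0, hL1⟩ := log_two_mem
  set d0 : ℝ := Real.sqrt (1 - L^2) with hd0
  have hd0pos : 0 < d0 := Real.sqrt_pos.2 (by nlinarith)
  have hd0lt1 : d0 < 1 := by
    have h := Real.sqrt_lt_sqrt (show (0:ℝ) ≤ 1 - L^2 by nlinarith)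
      (show 1 - L^2 < 1 by nlinarith)
    rwa [Real.sqrt_one] at h
  have hd0sq : d0^2 = 1 - L^2 := Real.sq_sqrt (by nlinarith)
  have hsubA : Icc (0:ℝ) d0 ⊆ Ioo (-1:ℝ) 1 :=
    fun x hx => ⟨by linarith [hx.1], by linarith [hx.2]⟩
  have hmonoK' : MonotoneOn (fun t => Ffn' t - L * Gfn' t) (Icc (0:ℝ) d0) := by
    apply monotoneOn_of_hasDerivWithinAt_nonneg (convex_Icc 0 d0)
      (f' := fun t => 2 / (1 - t^2) - L * (2 / (Real.sqrt (1 - t^2))^3))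
    · intro x hx
      exact ((hasDerivAt_Ffn' (hsubA hx)).sub
        ((hasDerivAt_Gfn' (hsubA hx)).const_mul L)).continuousAt.continuousWithinAt
    · intro x hx
      rw [interior_Icc] at hx
      exact ((hasDerivAt_Ffn' (hsubA (Ioo_subset_Icc_self hx))).sub
        ((hasDerivAt_Gfn' (hsubA (Ioo_subset_Icc_self hx))).const_mul L)).hasDerivWithinAt
    · intro x hx
      rw [interior_Icc] at hx
      have hx1 : x < 1 := lt_trans hx.2 hd0lt1
      have hpos : 0 < 1 - x^2 := by nlinarith [hx.1]
      have hs : 0 < Real.sqrt (1 - x^2) := Real.sqrt_pos.2 hpos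
      have hcL : L ≤ Real.sqrt (1 - x^2) := by
        have h := Real.sqrt_le_sqrt (show L^2 ≤ 1 - x^2 by nlinarith [hx.1, hx.2, hd0sq])
        rwa [Real.sqrt_sq hL0.le] at h
      set c := Real.sqrt (1 - x^2) with hc
      have hsq : c ^ 2 = 1 - x^2 := Real.sq_sqrt hpos.le
      have hrw : L * (2 / c^3) = 2*L / c^3 := by ring
      rw [← hsq, sub_nonneg, hrw, div_le_div_iff₀ (pow_pos hs 3) (by positivity)]
      nlinarith [mul_le_mul_of_nonneg_right hcL (sq_nonneg c), hs]
  have hK'nonneg : ∀ x ∈ Icc (0:ℝ) d0, 0 ≤ Ffn' x - L * Gfn' x := by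
    intro x hx
    have h := hmonoK' (left_mem_Icc.2 hd0pos.le) hx hx.1
    simpa [Ffn'_zero, Gfn'_zero] using h
  have hmonoK : MonotoneOn (fun t => Ffn t - L * Gfn t) (Icc (0:ℝ) d0) := by
    apply monotoneOn_of_hasDerivWithinAt_nonneg (convex_Icc 0 d0)
      (f' := fun t => Ffn' t - L * Gfn' t)
    · exact (continuous_Ffn.sub (continuous_const.mul continuous_Gfn)).continuousOn
    · intro x hx
      rw [interior_Icc] at hx
      exact ((hasDerivAt_Ffn (hsubA (Ioo_subset_Icc_self hx))).sub
        ((hasDerivAt_Gfn (hsubA (Ioo_subset_Icc_self hx))).const_mul L)).hasDerivWithinAt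
    · intro x hx
      rw [interior_Icc] at hx
      exact hK'nonneg x (Ioo_subset_Icc_self hx)
  have hKa : ∀ x ∈ Icc (0:ℝ) d0, 0 ≤ Ffn x - L * Gfn x := by
    intro x hx
    have h := hmonoK (left_mem_Icc.2 hd0pos.le) hx hx.1
    simpa [Ffn_zero, Gfn_zero] using h
  have hK1 : Ffn 1 - L * Gfn 1 = 0 := by
    have h1 : Ffn 1 = 2 * Real.log 2 := by
      unfold Ffn; norm_num
    have h2 : Gfn 1 = 2 := by
      unfold Gfn; norm_num
    rw [h1, h2, hL]; ring
  have hconc : ConcaveOn ℝ (Icc d0 1) (fun t => Ffn t - L * Gfn t) := by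
    apply concaveOn_of_hasDerivWithinAt2_nonpos (convex_Icc d0 1)
      (f' := fun t => Ffn' t - L * Gfn' t)
      (f'' := fun t => 2 / (1 - t^2) - L * (2 / (Real.sqrt (1 - t^2))^3))
    · exact (continuous_Ffn.sub (continuous_const.mul continuous_Gfn)).continuousOn
    · intro x hx
      rw [interior_Icc] at hx
      have hxm : x ∈ Ioo (-1:ℝ) 1 := ⟨by linarith [hx.1], hx.2⟩
      exact ((hasDerivAt_Ffn hxm).sub
        ((hasDerivAt_Gfn hxm).const_mul L)).hasDerivWithinAt
    · intro x hx
      rw [interior_Icc] at hx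
      have hxm : x ∈ Ioo (-1:ℝ) 1 := ⟨by linarith [hx.1], hx.2⟩
      exact ((hasDerivAt_Ffn' hxm).sub
        ((hasDerivAt_Gfn' hxm).const_mul L)).hasDerivWithinAt
    · intro x hx
      rw [interior_Icc] at hx
      have hx0 : 0 < x := lt_trans hd0pos hx.1
      have hpos : 0 < 1 - x^2 := by nlinarith [hx.2]
      have hs : 0 < Real.sqrt (1 - x^2) := Real.sqrt_pos.2 hpos
      have hcL : Real.sqrt (1 - x^2) ≤ L := by
        have h := Real.sqrt_le_sqrt (show 1 - x^2 ≤ L^2 by nlinarith [hx.1, hd0sq])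
        rwa [Real.sqrt_sq hL0.le] at h
      set c := Real.sqrt (1 - x^2) with hc
      have hsq : c ^ 2 = 1 - x^2 := Real.sq_sqrt hpos.le
      have hrw : L * (2 / c^3) = 2*L / c^3 := by ring
      rw [← hsq, sub_nonpos, hrw, div_le_div_iff₀ (by positivity) (pow_pos hs 3)]
      nlinarith [mul_le_mul_of_nonneg_right hcL (sq_nonneg c), hs]
  rw [← sub_nonneg]
  rcases le_or_gt d d0 with hcase | hcase
  · exact hKa d ⟨hd.1, hcase⟩
  · have hden : 0 < 1 - d0 := by linarith
    set A : ℝ := (1 - d) / (1 - d0) with hA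
    set B : ℝ := (d - d0) / (1 - d0) with hB
    have hA0 : 0 ≤ A := div_nonneg (by linarith [hd.2]) hden.le
    have hB0 : 0 ≤ B := div_nonneg (by linarith) hden.le
    have hAB : A + B = 1 := by
      rw [hA, hB]
      field_simp
      ring
    have hcomb : A • d0 + B • (1:ℝ) = d := by
      simp only [smul_eq_mul, mul_one]
      rw [hA, hB]
      field_simp [hden.ne']
      ring
    have h := hconc.2 (left_mem_Icc.2 hd0lt1.le) (right_mem_Icc.2 hd0lt1.le) hA0 hB0 hAB
    rw [hcomb] at h
    have hKd0 : 0 ≤ Ffn d0 - L * Gfn d0 := hKa d0 (right_mem_Icc.2 hd0pos.le)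
    have hstep : (0:ℝ) ≤ A • (Ffn d0 - L * Gfn d0) + B • (Ffn 1 - L * Gfn 1) := by
      rw [hK1]
      simp only [smul_eq_mul, mul_zero, add_zero]
      positivity
    exact le_trans hstep h

lemma Ffn_abs (d : ℝ) : Ffn |d| = Ffn d := by
  rcases abs_cases d with ⟨h, _⟩ | ⟨h, _⟩
  · rw [h]
  · rw [h]
    show (1 + -d) * Real.log (1 + -d) + (1 - -d) * Real.log (1 - -d) = Ffn d
    rw [show (1:ℝ) + -d = 1 - d by ring, show (1:ℝ) - -d = 1 + d by ring]
    unfold Ffn; ring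

lemma Gfn_abs (d : ℝ) : Gfn |d| = Gfn d := by
  unfold Gfn
  rw [sq_abs]

/-- Per-term two-sided bound. -/
lemma per_term (a b : ℝ) (ha : 0 < a) (hb : 0 < b) :
    Real.log 2 * (Real.sqrt a - Real.sqrt b)^2
      ≤ a * Real.log (2*a/(a+b)) + b * Real.log (2*b/(a+b)) ∧
    a * Real.log (2*a/(a+b)) + b * Real.log (2*b/(a+b))
      ≤ (Real.sqrt a - Real.sqrt b)^2 := by
  set s : ℝ := a + b with hs
  have hspos : 0 < s := by positivity
  have hsne : s ≠ 0 := ne_of_gt hspos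
  set d : ℝ := (a - b) / s with hd
  have h2a : 2*a/s = 1 + d := by
    rw [hd]; field_simp [hsne]; ring
  have h2b : 2*b/s = 1 - d := by
    rw [hd]; field_simp [hsne]; ring
  have habs : |d| < 1 := by
    rw [hd, abs_div, abs_of_pos hspos, div_lt_one hspos, abs_lt]
    constructor <;> [linarith; linarith]
  have hmem : |d| ∈ Ico (0:ℝ) 1 := ⟨abs_nonneg d, habs⟩
  have ha' : a = s * (1 + d) / 2 := by
    have h := h2a
    rw [div_eq_iff hsne] at h
    linear_combination h / 2
  have hb' : b = s * (1 - d) / 2 := by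
    have h := h2b
    rw [div_eq_iff hsne] at h
    linear_combination h / 2
  have hI1 : a * Real.log (2*a/s) + b * Real.log (2*b/s) = (s/2) * Ffn d := by
    rw [h2a, h2b]
    unfold Ffn
    rw [ha', hb']
    ring
  have hI2 : (Real.sqrt a - Real.sqrt b)^2 = (s/2) * Gfn d := by
    have hsa : Real.sqrt a ^ 2 = a := Real.sq_sqrt ha.le
    have hsb : Real.sqrt b ^ 2 = b := Real.sq_sqrt hb.le
    have hab : Real.sqrt a * Real.sqrt b = Real.sqrt (a*b) :=
      (Real.sqrt_mul ha.le b).symm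
    have habval : a * b = (s/2)^2 * (1 - d^2) := by
      rw [ha', hb']; ring
    have hsqab : Real.sqrt (a*b) = (s/2) * Real.sqrt (1 - d^2) := by
      rw [habval, Real.sqrt_mul (sq_nonneg _), Real.sqrt_sq (by positivity)]
    have hexp : (Real.sqrt a - Real.sqrt b)^2 = s - 2*(Real.sqrt a * Real.sqrt b) := by
      rw [hs]; linear_combination hsa + hsb
    rw [hexp, hab, hsqab]
    unfold Gfn
    ring
  have hF : Ffn d ≤ Gfn d := by
    rw [← Ffn_abs, ← Gfn_abs]; exact Ffn_le_Gfn hmem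
  have hG : Real.log 2 * Gfn d ≤ Ffn d := by
    rw [← Ffn_abs, ← Gfn_abs]; exact log_two_Gfn_le_Ffn hmem
  constructor
  · rw [hI1, hI2]
    calc Real.log 2 * ((s/2) * Gfn d) = (s/2) * (Real.log 2 * Gfn d) := by ring
      _ ≤ (s/2) * Ffn d := mul_le_mul_of_nonneg_left hG (by positivity)
  · rw [hI1, hI2]
    exact mul_le_mul_of_nonneg_left hF (by positivity)

/-- `4·JS(x,y) ≤ ρ(x,y)² ≤ (4/ln 2)·JS(x,y)` in the positive orthant. -/
theorem js_vs_fisher (n : ℕ) (x y : Fin n → ℝ) (hx : ∀ i, 0 < x i) (hy : ∀ i, 0 < y i) :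
    4 * ((1 / 2) * ∑ i, (x i * Real.log (2 * x i / (x i + y i))
          + y i * Real.log (2 * y i / (x i + y i))))
      ≤ 2 * ∑ i, (Real.sqrt (x i) - Real.sqrt (y i)) ^ 2 ∧
    2 * ∑ i, (Real.sqrt (x i) - Real.sqrt (y i)) ^ 2
      ≤ (4 / Real.log 2) * ((1 / 2) * ∑ i, (x i * Real.log (2 * x i / (x i + y i))
          + y i * Real.log (2 * y i / (x i + y i)))) := by
  have hL : 0 < Real.log 2 := Real.log_pos (by norm_num)
  set S1 : ℝ := ∑ i, (x i * Real.log (2 * x i / (x i + y i))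
          + y i * Real.log (2 * y i / (x i + y i))) with hS1
  set S2 : ℝ := ∑ i, (Real.sqrt (x i) - Real.sqrt (y i)) ^ 2 with hS2
  have hupper : S1 ≤ S2 := by
    apply Finset.sum_le_sum
    intro i _
    exact (per_term (x i) (y i) (hx i) (hy i)).2
  have hlower : Real.log 2 * S2 ≤ S1 := by
    rw [hS2, Finset.mul_sum]
    apply Finset.sum_le_sum
    intro i _
    exact (per_term (x i) (y i) (hx i) (hy i)).1
  constructor
  · linarith
  · rw [div_mul_eq_mul_div, le_div_iff₀ hL]
    nlinarith
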